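/- Let G be a right-monogamous acyclic cospan m → G ← n and let L be a convex sub-hypergraph of G. Define C₁ as the smallest sub-hypergraph of G containing the inputs of G and every hyperedge of G not in L that has a path to L, and C₂ as the smallest sub-hypergraph containing the outputs of G with C₁ ∪ L ∪ C₂ = G. Then C₁ and C₂ share no hyperedges; in particular C₁, L, C₂ pairwise overlap only in nodes. -/

import Mathlib

structure LHypergraph where
  V : Type
  E : Type
  src : E → List V
  tgt : E → List V

namespace LHypergraph

inductive Walk (G : LHypergraph) : G.V → G.V → Type where
  | nil (v : G.V) : Walk G v v
  | cons {u v w : G.V} (e : G.E) (hu : u ∈ G.src e) (hv : v ∈ G.tgt e)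
      (p : Walk G v w) : Walk G u w

def Walk.verts {G : LHypergraph} : {u v : G.V} → Walk G u v → List G.V
  | _, _, .nil v => [v]
  | u, _, .cons _ _ _ p => u :: p.verts

def Walk.edges {G : LHypergraph} : {u v : G.V} → Walk G u v → List G.E
  | _, _, .nil _ => []
  | _, _, .cons e _ _ p => e :: p.edges

/-- A hypergraph is acyclic if no path contains the same node twice. -/
def Acyclic (G : LHypergraph) : Prop :=
  ∀ {u v : G.V} (p : Walk G u v), p.verts.Nodup

/-- There exists a nonempty path from u to v. -/
def Reaches (G : LHypergraph) (u v : G.V) : Prop :=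
  ∃ p : Walk G u v, p.edges ≠ []

/-- A node is terminal if it is the source of no hyperedge. -/
def Terminal (G : LHypergraph) (v : G.V) : Prop := ∀ e : G.E, v ∉ G.src e

/-- A sub-hypergraph: sets of nodes and hyperedges closed under the
source and target maps. -/
structure Sub (G : LHypergraph) where
  SV : Set G.V
  SE : Set G.E
  closed_src : ∀ e ∈ SE, ∀ v ∈ G.src e, v ∈ SV
  closed_tgt : ∀ e ∈ SE, ∀ v ∈ G.tgt e, v ∈ SV

/-- Inclusion of sub-hypergraphs. -/
def Sub.le {G : LHypergraph} (A B : Sub G) : Prop := A.SV ⊆ B.SV ∧ A.SE ⊆ B.SE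

/-- A sub-hypergraph L is convex if every hyperedge on any path of G between
two nodes of L is in L. -/
def Sub.Convex {G : LHypergraph} (L : Sub G) : Prop :=
  ∀ (u v : G.V) (p : Walk G u v), u ∈ L.SV → v ∈ L.SV → ∀ e ∈ p.edges, e ∈ L.SE

/-- A hyperedge has a path to L: one of its targets is in L or reaches a node
of L. -/
def EdgeToSub (G : LHypergraph) (L : Sub G) (e : G.E) : Prop :=
  ∃ v ∈ G.tgt e, ∃ w ∈ L.SV, v = w ∨ G.Reaches v w

/-- `IsC₁ G f L C₁` : C₁ is the smallest sub-hypergraph of G containing the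
inputs of G and every hyperedge of G not in L that has a path to L. -/
def IsC₁ {m : ℕ} (G : LHypergraph) (f : Fin m → G.V) (L C₁ : Sub G) : Prop :=
  Set.range f ⊆ C₁.SV ∧
  {e : G.E | e ∉ L.SE ∧ EdgeToSub G L e} ⊆ C₁.SE ∧
  ∀ D : Sub G, Set.range f ⊆ D.SV → {e : G.E | e ∉ L.SE ∧ EdgeToSub G L e} ⊆ D.SE →
    C₁.le D

/-- `IsC₂ G g L C₁ C₂` : C₂ is the smallest sub-hypergraph of G containing the
outputs of G such that C₁ ∪ L ∪ C₂ = G. -/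
def IsC₂ {n : ℕ} (G : LHypergraph) (g : Fin n → G.V) (L C₁ C₂ : Sub G) : Prop :=
  Set.range g ⊆ C₂.SV ∧
  (C₁.SV ∪ L.SV ∪ C₂.SV = Set.univ) ∧ (C₁.SE ∪ L.SE ∪ C₂.SE = Set.univ) ∧
  ∀ D : Sub G, Set.range g ⊆ D.SV →
    (C₁.SV ∪ L.SV ∪ D.SV = Set.univ) → (C₁.SE ∪ L.SE ∪ D.SE = Set.univ) →
    C₂.le D

end LHypergraph

/- STATEMENT 13: Let m → G ← n be a right-monogamous acyclic cospan and L a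
convex sub-hypergraph of G. With C₁ the smallest sub-hypergraph containing the
inputs of G and every hyperedge of G not in L that has a path to L, and C₂ the
smallest sub-hypergraph containing the outputs of G with C₁ ∪ L ∪ C₂ = G, the
sub-hypergraphs C₁ and C₂ share no hyperedges; in particular C₁, L, C₂
pairwise overlap only in nodes. -/

open LHypergraph in
theorem c1_c2_share_no_hyperedges {m n : ℕ} (G : LHypergraph)
    (f : Fin m → G.V) (g : Fin n → G.V)
    (hacyclic : G.Acyclic)
    (hgmono : Function.Injective g)
    (hgterm : Set.range g = {v : G.V | G.Terminal v})
    (L : Sub G) (hL : L.Convex)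
    (C₁ : Sub G) (hC₁ : IsC₁ G f L C₁)
    (C₂ : Sub G) (hC₂ : IsC₂ G g L C₁ C₂) :
    C₁.SE ∩ C₂.SE = ∅ ∧ C₁.SE ∩ L.SE = ∅ ∧ L.SE ∩ C₂.SE = ∅ := by
  -- Witness for minimality of C₁
  set D₁ : Sub G :=
    { SV := Set.range f ∪ {v | ∃ e, (e ∉ L.SE ∧ EdgeToSub G L e) ∧
        (v ∈ G.src e ∨ v ∈ G.tgt e)}
      SE := {e | e ∉ L.SE ∧ EdgeToSub G L e}
      closed_src := fun e he v hv => Or.inr ⟨e, he, Or.inl hv⟩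
      closed_tgt := fun e he v hv => Or.inr ⟨e, he, Or.inr hv⟩ } with hD₁
  have h1 : C₁.SE ⊆ D₁.SE :=
    (hC₁.2.2 D₁ Set.subset_union_left (fun e he => he)).2
  -- Witness for minimality of C₂
  set D₂ : Sub G :=
    { SV := Set.univ
      SE := {e | e ∉ C₁.SE ∧ e ∉ L.SE}
      closed_src := fun _ _ _ _ => trivial
      closed_tgt := fun _ _ _ _ => trivial } with hD₂
  have h2 : C₂.SE ⊆ D₂.SE := by
    refine (hC₂.2.2.2 D₂ (Set.subset_univ _) ?_ ?_).2
    · simp [hD₂]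
    · ext e
      simp only [Set.mem_union, Set.mem_univ, iff_true, hD₂, Set.mem_setOf_eq]
      tauto
  refine ⟨?_, ?_, ?_⟩
  · ext e
    simp only [Set.mem_inter_iff, Set.mem_empty_iff_false, iff_false, not_and]
    intro he1 he2
    exact (h2 he2).1 he1
  · ext e
    simp only [Set.mem_inter_iff, Set.mem_empty_iff_false, iff_false, not_and]
    intro he1 he2
    exact (h1 he1).1 he2
  · ext e
    simp only [Set.mem_inter_iff, Set.mem_empty_iff_false, iff_false, not_and]
    intro he1 he2
    exact (h2 he2).2 he1
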